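/- Let e ≥ 2 and let ν be an e-restricted partition. Applying the conjugate Mullineux-rim construction (Definition of f₁ > g₁ > … > f_u > g_u on the abacus of ν), one has rim'(ν) = rim(ν') and ν^▽ = ((ν')^△)'. -/

import Mathlib

open scoped BigOperators

def IsPartition (f : ℕ → ℕ) : Prop :=
  (∀ ⦃i j : ℕ⦄, i ≤ j → f j ≤ f i) ∧ ∃ N : ℕ, ∀ i, N ≤ i → f i = 0

noncomputable def conj (f : ℕ → ℕ) (i : ℕ) : ℕ := Nat.card {j : ℕ // i + 1 ≤ f j}

noncomputable def psize (f : ℕ → ℕ) : ℕ := ∑ i ∈ Finset.range (conj f 0), f i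

def betaSet (f : ℕ → ℕ) (r : ℕ) : Multiset ℕ :=
  (Multiset.range r).map fun i => f i + (r - 1 - i)

def eExt (e : ℕ) (B : Multiset ℕ) : Multiset ℕ :=
  B.bind fun b => (Multiset.range (b / e + 1)).map fun j => b - j * e

def runnerCount (e d : ℕ) (B : Multiset ℕ) : ℕ :=
  Multiset.card (B.filter fun b => b % e = d)

def coreBeta (e : ℕ) (B : Multiset ℕ) : Multiset ℕ :=
  (Multiset.range e).bind fun j =>
    (Multiset.range (runnerCount e j B)).map fun i => j + i * e

def weightMS (e : ℕ) (B : Multiset ℕ) : Multiset ℕ :=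
  eExt e B - eExt e (coreBeta e B)

def eWeight (e : ℕ) (B : Multiset ℕ) : ℕ := Multiset.card (weightMS e B)

def DomMS (I J : Multiset ℕ) : Prop := Multiset.Rel (fun a b => b ≤ a) I J

def Dominates (e r : ℕ) (g f : ℕ → ℕ) : Prop :=
  coreBeta e (betaSet g r) = coreBeta e (betaSet f r) ∧
    DomMS (eExt e (betaSet g r)) (eExt e (betaSet f r))

def KEmpty (e k r : ℕ) (f : ℕ → ℕ) : Prop :=
  ∀ b ∈ betaSet f r, b % e = (r + k) % e →
    b < (r + k) % e + runnerCount e ((r + k) % e) (betaSet f r) * e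

def Lk (e k r : ℕ) (f : ℕ → ℕ) : ℕ :=
  Multiset.card <| (eExt e (betaSet f r)).filter fun x =>
    (r + k) % e + runnerCount e ((r + k) % e) (betaSet f r) * e < x

def phi (e d z : ℕ) : ℕ := z - (z + e - d) / e

def removeRunnerB (e d : ℕ) (B : Multiset ℕ) : Multiset ℕ :=
  (B.filter fun b => ¬ b % e = d).map (phi e d)

def partOfBeta (C : Multiset ℕ) : ℕ → ℕ := fun i =>
  ((C.sort (· ≤ ·)).reverse.getD i 0) - (Multiset.card C - 1 - i)

def removeRunnerP (e k r : ℕ) (f : ℕ → ℕ) : ℕ → ℕ :=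
  partOfBeta (removeRunnerB e ((r + k) % e) (betaSet f r))

def nrk (e d : ℕ) (B : Multiset ℕ) : ℕ :=
  ((B.filter fun a => a % e = d).map fun a =>
    Multiset.card (B.filter fun b => a < b ∧ ¬ b % e = d)).sum

def ERegular (e : ℕ) (f : ℕ → ℕ) : Prop := ¬ ∃ i : ℕ, f i = f (i + e - 1) ∧ 0 < f i

def ERestricted (e : ℕ) (f : ℕ → ℕ) : Prop := ∀ i : ℕ, f i < f (i + 1) + e

noncomputable def firstGap (B : Multiset ℕ) : ℕ := sInf {p : ℕ | p ∉ B}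

noncomputable def lastBead (B : Multiset ℕ) : ℕ := sSup {p : ℕ | p ∈ B}

def rimDown (B : Multiset ℕ) (L : List (ℕ × ℕ)) : Multiset ℕ :=
  (B - ↑(L.map Prod.fst)) + ↑(L.map Prod.snd)

def rimLen (L : List (ℕ × ℕ)) : ℕ := (L.map fun p => p.1 - p.2).sum

def RimSeq (e : ℕ) (B : Multiset ℕ) (L : List (ℕ × ℕ)) : Prop :=
  L ≠ [] ∧
  (L.flatMap fun p => [p.1, p.2]).Chain' (· > ·) ∧
  (∀ p ∈ L, p.1 ∈ B ∧ p.2 ∉ B) ∧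
  (L.headI.1 ∈ B ∧ ∀ x ∈ B, x ≤ L.headI.1) ∧
  (∀ i : ℕ, i + 1 < L.length →
    L[i]!.1 % e = L[i]!.2 % e ∧
    (∀ j : ℕ, 1 ≤ j → L[i]!.2 + j * e < L[i]!.1 → L[i]!.2 + j * e ∈ B) ∧
    (∀ p : ℕ, L[i + 1]!.1 < p → p < L[i]!.2 → p ∉ B)) ∧
  ((L.getLast!.1 % e = L.getLast!.2 % e ∧
      (∀ j : ℕ, 1 ≤ j → L.getLast!.2 + j * e < L.getLast!.1 → L.getLast!.2 + j * e ∈ B) ∧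
      (∀ p : ℕ, firstGap B ≤ p → p < L.getLast!.2 → p ∉ B)) ∨
    ((∀ j : ℕ, 1 ≤ j → j * e ≤ L.getLast!.1 → L.getLast!.1 - j * e ∈ B) ∧
      L.getLast!.2 = firstGap B))

def RimSeq' (e : ℕ) (B : Multiset ℕ) (L : List (ℕ × ℕ)) : Prop :=
  L ≠ [] ∧
  (L.flatMap fun p => [p.1, p.2]).Chain' (· > ·) ∧
  (∀ p ∈ L, p.1 ∈ B ∧ p.2 ∉ B) ∧
  L.getLast!.2 = firstGap B ∧
  (∀ i : ℕ, 0 < i → i < L.length →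
    L[i]!.1 % e = L[i]!.2 % e ∧
    (∀ j : ℕ, 1 ≤ j → L[i]!.2 + j * e < L[i]!.1 → L[i]!.2 + j * e ∉ B) ∧
    (∀ p : ℕ, L[i]!.1 < p → p < L[i - 1]!.2 → p ∈ B)) ∧
  ((L.headI.1 % e = L.headI.2 % e ∧
      (∀ j : ℕ, 1 ≤ j → L.headI.2 + j * e < L.headI.1 → L.headI.2 + j * e ∉ B) ∧
      (∀ p : ℕ, L.headI.1 < p → p ≤ lastBead B → p ∈ B)) ∨
    ((∀ j : ℕ, 1 ≤ j → L.headI.2 + j * e ∉ B) ∧ L.headI.1 = lastBead B))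

inductive MullRel (e r : ℕ) : Multiset ℕ → Multiset ℕ → Prop where
  | empty : MullRel e r (Multiset.range r) (Multiset.range r)
  | step (B C : Multiset ℕ) (L M : List (ℕ × ℕ)) :
      RimSeq e B L → RimSeq e C M →
      MullRel e r (rimDown B L) (rimDown C M) →
      ERegular e (partOfBeta C) →
      rimLen M = rimLen L →
      (r - firstGap C =
        (if rimLen L % e = 0 then rimLen L - (r - firstGap B)
         else rimLen L - (r - firstGap B) + 1)) →
      MullRel e r B C


/-! ### Auxiliary lemmas -/

section StmtAux

open List Multiset

/-- `i < conj f j ↔ j + 1 ≤ f i` for a partition `f`. -/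
lemma conj_lt_iff {f : ℕ → ℕ} (hf : IsPartition f) (j i : ℕ) :
    i < conj f j ↔ j + 1 ≤ f i := by
  obtain ⟨hmono, N, hN⟩ := hf
  have hne : {i : ℕ | f i ≤ j}.Nonempty := ⟨N, by simpa using (hN N le_rfl).le.trans (Nat.zero_le j)⟩
  set m := sInf {i : ℕ | f i ≤ j} with hm
  have hmmem : f m ≤ j := Nat.sInf_mem hne
  have hS : ∀ i : ℕ, j + 1 ≤ f i ↔ i < m := by
    intro i
    constructor
    · intro h
      by_contra hlt
      push_neg at hlt
      exact absurd ((hmono hlt).trans hmmem) (by omega)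
    · intro h
      have : i ∉ {i : ℕ | f i ≤ j} := Nat.notMem_of_lt_sInf h
      simp only [Set.mem_setOf_eq, not_le] at this
      omega
  have hcm : conj f j = m := by
    have hset : {x : ℕ | j + 1 ≤ f x} = Set.Iio m := by
      ext i; simpa [Set.mem_Iio] using hS i
    have h0 : conj f j = Nat.card {x : ℕ | j + 1 ≤ f x} := rfl
    rw [h0, hset]
    simp [Nat.card_eq_card_toFinset]
  rw [hcm, ← hS i]

lemma conj_isPartition {f : ℕ → ℕ} (hf : IsPartition f) : IsPartition (conj f) := by
  constructor
  · intro j j' hjj'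
    by_contra h
    push_neg at h
    have h1 : conj f j < conj f j' := h
    have h2 : j' + 1 ≤ f (conj f j) := (conj_lt_iff hf j' _).mp h1
    have h3 : conj f j < conj f j := (conj_lt_iff hf j _).mpr (by omega)
    omega
  · refine ⟨f 0, fun j hj => ?_⟩
    by_contra h
    have h0 : 0 < conj f j := Nat.pos_of_ne_zero h
    have := (conj_lt_iff hf j 0).mp h0
    have := hf.1 (Nat.zero_le 0)
    omega

lemma conj_zero_pos {f : ℕ → ℕ} (hf : IsPartition f) (hne : f 0 ≠ 0) : 0 < conj f 0 :=
  (conj_lt_iff hf 0 0).mpr (by omega)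

lemma apply_eq_zero_of_conj_le {f : ℕ → ℕ} (hf : IsPartition f) {i : ℕ}
    (h : conj f 0 ≤ i) : f i = 0 := by
  by_contra hne
  have : i < conj f 0 := (conj_lt_iff hf 0 i).mpr (by omega)
  omega

lemma conj_conj_apply {f : ℕ → ℕ} (hf : IsPartition f) (j : ℕ) : conj (conj f) j = f j := by
  have h1 : ∀ i, i < conj (conj f) j ↔ i < f j := by
    intro i
    rw [conj_lt_iff (conj_isPartition hf) j i]
    have h2 := conj_lt_iff hf i j
    omega
  have := h1 (conj (conj f) j)
  have := h1 (f j)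
  omega

/-! ### betaSet basics -/

lemma mem_betaSet {f : ℕ → ℕ} {r x : ℕ} :
    x ∈ betaSet f r ↔ ∃ i, i < r ∧ f i + (r - 1 - i) = x := by
  simp [betaSet]

lemma betaSet_strictAnti {f : ℕ → ℕ} (hf : IsPartition f) {i j r : ℕ}
    (hij : i < j) (hj : j < r) : f j + (r - 1 - j) < f i + (r - 1 - i) := by
  have := hf.1 hij.le
  omega

lemma betaSet_nodup {f : ℕ → ℕ} (hf : IsPartition f) (r : ℕ) : (betaSet f r).Nodup := by
  rw [betaSet]
  refine Multiset.Nodup.map_on ?_ (Multiset.nodup_range r)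
  intro i hi j hj hij
  simp only [Multiset.mem_range] at hi hj
  by_contra hne
  rcases Nat.lt_or_ge i j with h | h
  · have := betaSet_strictAnti hf h hj
    omega
  · have hji : j < i := by omega
    have := betaSet_strictAnti hf hji hi
    omega

lemma card_betaSet (f : ℕ → ℕ) (r : ℕ) : Multiset.card (betaSet f r) = r := by
  simp [betaSet]

lemma betaSet_le {f : ℕ → ℕ} (hf : IsPartition f) {r x : ℕ} (hx : x ∈ betaSet f r) :
    x ≤ f 0 + (r - 1) := by
  rw [mem_betaSet] at hx
  obtain ⟨i, hi, hix⟩ := hx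
  have := hf.1 (Nat.zero_le i)
  omega

/-! ### complement-rotation -/

noncomputable def compRot (N : ℕ) (C : Multiset ℕ) : Multiset ℕ :=
  (Multiset.range (N + 1) - C).map (N - ·)

lemma le_range_of {C : Multiset ℕ} {N : ℕ} (hnd : C.Nodup) (hle : ∀ x ∈ C, x ≤ N) :
    C ≤ Multiset.range (N + 1) := by
  rw [Multiset.le_iff_subset hnd]
  intro x hx
  rw [Multiset.mem_range]
  exact Nat.lt_succ_of_le (hle x hx)

lemma mem_sub_range {C : Multiset ℕ} {N x : ℕ} (h : C ≤ Multiset.range (N + 1)) :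
    x ∈ Multiset.range (N + 1) - C ↔ x ≤ N ∧ x ∉ C := by
  have hc1 : Multiset.count x C ≤ Multiset.count x (Multiset.range (N + 1)) :=
    Multiset.le_iff_count.mp h x
  rw [← Multiset.count_pos, Multiset.count_sub]
  by_cases hxN : x ≤ N
  · have hxr : x ∈ Multiset.range (N + 1) := by rw [Multiset.mem_range]; omega
    have h1 : Multiset.count x (Multiset.range (N + 1)) = 1 :=
      Multiset.count_eq_one_of_mem (Multiset.nodup_range _) hxr
    rw [h1]
    constructor
    · intro hpos
      refine ⟨hxN, fun hxC => ?_⟩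
      have := Multiset.count_pos.mpr hxC
      omega
    · rintro ⟨-, hxC⟩
      have := Multiset.count_eq_zero.mpr hxC
      omega
  · have hxr : Multiset.count x (Multiset.range (N + 1)) = 0 :=
      Multiset.count_eq_zero.mpr (by rw [Multiset.mem_range]; omega)
    rw [hxr]
    constructor
    · intro h
      omega
    · rintro ⟨h, -⟩
      omega

lemma mem_compRot {C : Multiset ℕ} {N x : ℕ} (h : C ≤ Multiset.range (N + 1)) :
    x ∈ compRot N C ↔ x ≤ N ∧ N - x ∉ C := by
  rw [compRot, Multiset.mem_map]
  constructor
  · rintro ⟨p, hp, rfl⟩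
    rw [mem_sub_range h] at hp
    exact ⟨by omega, by rw [Nat.sub_sub_self hp.1]; exact hp.2⟩
  · rintro ⟨hxN, hNx⟩
    exact ⟨N - x, (mem_sub_range h).mpr ⟨by omega, hNx⟩, by omega⟩

lemma compRot_nodup {C : Multiset ℕ} (N : ℕ) : (compRot N C).Nodup := by
  have h1 : (Multiset.range (N + 1) - C).Nodup :=
    Multiset.nodup_of_le (Multiset.sub_le_self _ _) (Multiset.nodup_range _)
  refine Multiset.Nodup.map_on ?_ h1
  intro a ha b hb hab
  have ha' : a < N + 1 := Multiset.mem_range.mp (Multiset.mem_of_le (Multiset.sub_le_self _ _) ha)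
  have hb' : b < N + 1 := Multiset.mem_range.mp (Multiset.mem_of_le (Multiset.sub_le_self _ _) hb)
  omega

lemma card_compRot {C : Multiset ℕ} {N : ℕ} (h : C ≤ Multiset.range (N + 1)) :
    Multiset.card (compRot N C) = N + 1 - Multiset.card C := by
  rw [compRot, Multiset.card_map, Multiset.card_sub h, Multiset.card_range]

/-- CORE duality: the beta-set of the conjugate is the rotated complement. -/
lemma betaSet_conj_eq {f : ℕ → ℕ} (hf : IsPartition f) {r s : ℕ}
    (hr : conj f 0 ≤ r) (hs : f 0 ≤ s) (hs1 : 1 ≤ s) (hr1 : 1 ≤ r) :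
    betaSet (conj f) s = compRot (r + s - 1) (betaSet f r) := by
  set N := r + s - 1 with hN
  have hBle : betaSet f r ≤ Multiset.range (N + 1) := by
    refine le_range_of (betaSet_nodup hf r) (fun x hx => ?_)
    have := betaSet_le hf hx
    omega
  have hsub : betaSet (conj f) s ≤ compRot N (betaSet f r) := by
    rw [Multiset.le_iff_subset (betaSet_nodup (conj_isPartition hf) s)]
    intro x hx
    rw [mem_betaSet] at hx
    obtain ⟨j, hj, hjx⟩ := hx
    have hcle : conj f j ≤ conj f 0 := (conj_isPartition hf).1 (Nat.zero_le j)
    rw [mem_compRot hBle]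
    constructor
    · omega
    · rw [mem_betaSet]
      rintro ⟨i, hi, hieq⟩
      rcases Nat.lt_or_ge i (conj f j) with hlt | hge
      · have := (conj_lt_iff hf j i).mp hlt
        omega
      · have : ¬ (j + 1 ≤ f i) := fun hcon => by
          have := (conj_lt_iff hf j i).mpr hcon
          omega
        omega
  have hcard : Multiset.card (compRot N (betaSet f r)) ≤
      Multiset.card (betaSet (conj f) s) := by
    rw [card_compRot hBle, card_betaSet, card_betaSet]
    omega
  exact Multiset.eq_of_le_of_card_le hsub hcard


/-! ### sorted list of a nodup multiset -/

lemma sortRev_pairwise {C : Multiset ℕ} (hC : C.Nodup) :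
    ((C.sort (· ≤ ·)).reverse).Pairwise (· > ·) := by
  have h1 : (C.sort (· ≤ ·)).Pairwise (· ≤ ·) := Multiset.pairwise_sort C _
  have h2 : (C.sort (· ≤ ·)).Nodup := by
    have : ((C.sort (· ≤ ·) : List ℕ) : Multiset ℕ) = C := Multiset.sort_eq C _
    rw [← Multiset.coe_nodup, this]
    exact hC
  have h3 : (C.sort (· ≤ ·)).Pairwise (· < ·) := by
    have h4 := List.Pairwise.and h1 h2
    exact h4.imp fun h => lt_of_le_of_ne h.1 h.2
  rw [List.pairwise_reverse]
  exact h3.imp fun h => h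

lemma pairwise_gt_getElem {l : List ℕ} (h : l.Pairwise (· > ·)) (i j : ℕ)
    (hj : j < l.length) (hij : i < j) : l[j]'(by omega) < l[i]'(by omega) :=
  List.pairwise_iff_getElem.mp h i j (by omega) hj hij

lemma pairwise_gt_getElem_le {l : List ℕ} (h : l.Pairwise (· > ·)) :
    ∀ (i j : ℕ) (hj : j < l.length) (hij : i ≤ j), l[j]'hj + (j - i) ≤ l[i]'(by omega) := by
  intro i j
  induction j with
  | zero =>
    intro hj hij
    have hi : i = 0 := by omega
    subst hi
    simp
  | succ j ih =>
    intro hj hij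
    rcases Nat.eq_or_lt_of_le hij with rfl | hlt
    · simp
    · have h1 := ih (by omega) (by omega)
      have h2 := pairwise_gt_getElem h j (j + 1) hj (by omega)
      omega

/-! ### partOfBeta facts -/

lemma partOfBeta_apply (C : Multiset ℕ) (i : ℕ) :
    partOfBeta C i = ((C.sort (· ≤ ·)).reverse).getD i 0 - (Multiset.card C - 1 - i) := rfl

lemma sortRev_length (C : Multiset ℕ) :
    ((C.sort (· ≤ ·)).reverse).length = Multiset.card C := by
  rw [List.length_reverse, Multiset.length_sort]

lemma partOfBeta_eq_zero {C : Multiset ℕ} {i : ℕ} (h : Multiset.card C ≤ i) :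
    partOfBeta C i = 0 := by
  have h0 : ((C.sort (· ≤ ·)).reverse).length ≤ i := by rw [sortRev_length]; omega
  rw [partOfBeta_apply, List.getD_eq_default _ _ h0]
  simp

lemma partOfBeta_isPartition {C : Multiset ℕ} (hC : C.Nodup) :
    IsPartition (partOfBeta C) := by
  set l := (C.sort (· ≤ ·)).reverse with hl
  have hlen : l.length = Multiset.card C := sortRev_length C
  have hpw : l.Pairwise (· > ·) := sortRev_pairwise hC
  constructor
  · intro i j hij
    by_cases hj : j < Multiset.card C
    · have h1 : l.getD j 0 = l[j]'(by omega) := List.getD_eq_getElem l 0 (by omega)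
      have h2 : l.getD i 0 = l[i]'(by omega) := List.getD_eq_getElem l 0 (by omega)
      have h3 := pairwise_gt_getElem_le hpw i j (by omega) hij
      rw [partOfBeta_apply, partOfBeta_apply, h1, h2]
      omega
    · rw [partOfBeta_eq_zero (by omega)]
      exact Nat.zero_le _
  · exact ⟨Multiset.card C, fun i hi => partOfBeta_eq_zero hi⟩

lemma betaSet_partOfBeta {C : Multiset ℕ} (hC : C.Nodup) :
    betaSet (partOfBeta C) (Multiset.card C) = C := by
  set n := Multiset.card C with hn
  set l := (C.sort (· ≤ ·)).reverse with hl
  have hlen : l.length = n := sortRev_length C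
  have hpw : l.Pairwise (· > ·) := sortRev_pairwise hC
  have hge : ∀ i (hi : i < n), n - 1 - i ≤ l[i]'(by omega) := by
    intro i hi
    have := pairwise_gt_getElem_le hpw i (n - 1) (by omega) (by omega)
    omega
  have heq : ∀ i (hi : i < n), partOfBeta C i + (n - 1 - i) = l[i]'(by omega) := by
    intro i hi
    rw [partOfBeta_apply, List.getD_eq_getElem l 0 (by omega)]
    have := hge i hi
    omega
  have : betaSet (partOfBeta C) n = ((List.range n).map fun i => partOfBeta C i + (n - 1 - i) : List ℕ) := by
    rw [betaSet, Multiset.range, ← Multiset.map_coe]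
  have hC' : (l : Multiset ℕ) = C := by
    rw [hl, Multiset.coe_reverse, Multiset.sort_eq]
  have h4 : ((List.range n).map fun i => partOfBeta C i + (n - 1 - i)) = l := by
    apply List.ext_getElem
    · simp [hlen]
    · intro i h1 h2
      simp only [List.getElem_map, List.getElem_range]
      exact heq i (by simpa using h1)
  rw [this, h4, hC']

lemma partOfBeta_zero_le {C : Multiset ℕ} {N : ℕ} (h : ∀ x ∈ C, x ≤ N) :
    partOfBeta C 0 ≤ N - (Multiset.card C - 1) := by
  rw [partOfBeta_apply]
  rcases List.eq_nil_or_concat ((C.sort (· ≤ ·)).reverse) with hnil | _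
  · rw [hnil]
    simp
  · by_cases h0 : 0 < ((C.sort (· ≤ ·)).reverse).length
    · rw [List.getD_eq_getElem _ 0 h0]
      have hmem : ((C.sort (· ≤ ·)).reverse)[0]'h0 ∈ C := by
        have : ((C.sort (· ≤ ·)).reverse)[0]'h0 ∈ (C.sort (· ≤ ·)).reverse :=
          List.getElem_mem _
        rw [List.mem_reverse, ← Multiset.mem_coe, Multiset.sort_eq] at this
        exact this
      have := h _ hmem
      omega
    · rw [List.getD_eq_default _ 0 (by omega)]
      simp

lemma conj_zero_le_of_eq_zero {f : ℕ → ℕ} (hf : IsPartition f) {r : ℕ} (h : f r = 0) :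
    conj f 0 ≤ r := by
  by_contra hcon
  have := (conj_lt_iff hf 0 r).mp (by omega)
  omega

/-- L1: partOfBeta recovers the partition from its beta set. -/
lemma partOfBeta_betaSet {f : ℕ → ℕ} (hf : IsPartition f) {r : ℕ} (hr : conj f 0 ≤ r) :
    partOfBeta (betaSet f r) = f := by
  have key : (betaSet f r).sort (· ≤ ·)
      = ((List.range r).map fun i => f i + (r - 1 - i)).reverse := by
    refine (fun hp h1 h2 => List.Perm.eq_of_pairwise' (r := (· ≤ ·)) h1 h2 hp) ?_ ?_ ?_
    · rw [← Multiset.coe_eq_coe, Multiset.sort_eq, Multiset.coe_reverse]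
      rw [betaSet, Multiset.range, ← Multiset.map_coe]
    · exact Multiset.pairwise_sort _ _
    · have hpw : ((List.range r).map fun i => f i + (r - 1 - i)).Pairwise (· > ·) := by
        rw [List.pairwise_iff_getElem]
        intro a b ha hb hab
        simp only [List.getElem_map, List.getElem_range]
        exact betaSet_strictAnti hf hab (by simpa using hb)
      exact List.pairwise_reverse.mpr (hpw.imp fun h => le_of_lt h)
  funext i
  rw [partOfBeta_apply, key, List.reverse_reverse, card_betaSet]
  by_cases hi : i < r
  · rw [List.getD_eq_getElem _ 0 (by simp [hi])]
    simp only [List.getElem_map, List.getElem_range]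
    omega
  · rw [List.getD_eq_default _ 0 (by simp; omega)]
    have h0 : f i = 0 := apply_eq_zero_of_conj_le hf (by omega)
    omega


/-! ### rim sequence list facts -/

lemma sublist_fst (L : List (ℕ × ℕ)) :
    (L.map Prod.fst) <+ (L.flatMap fun p => [p.1, p.2]) := by
  induction L with
  | nil => simp
  | cons p t ih =>
    simp only [List.map_cons, List.flatMap_cons]
    exact List.Sublist.cons₂ p.1 (List.Sublist.cons p.2 ih)

lemma sublist_snd (L : List (ℕ × ℕ)) :
    (L.map Prod.snd) <+ (L.flatMap fun p => [p.1, p.2]) := by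
  induction L with
  | nil => simp
  | cons p t ih =>
    simp only [List.map_cons, List.flatMap_cons]
    exact List.Sublist.cons p.1 (List.Sublist.cons₂ p.2 ih)

lemma mem_flat_of_mem {L : List (ℕ × ℕ)} {p : ℕ × ℕ} (hp : p ∈ L) :
    p.1 ∈ (L.flatMap fun p => [p.1, p.2]) ∧ p.2 ∈ (L.flatMap fun p => [p.1, p.2]) := by
  constructor <;> (rw [List.mem_flatMap]; exact ⟨p, hp, by simp⟩)

lemma snd_lt_fst_of_flat {L : List (ℕ × ℕ)}
    (h : (L.flatMap fun p => [p.1, p.2]).Pairwise (· > ·)) :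
    ∀ p ∈ L, p.2 < p.1 := by
  induction L with
  | nil => simp
  | cons q t ih =>
    intro p hp
    rw [List.flatMap_cons, List.pairwise_append] at h
    rcases List.mem_cons.mp hp with rfl | hp
    · have := h.1
      simp only [List.pairwise_cons] at this
      exact this.1 p.2 (by simp)
    · exact ih h.2.1 p hp

lemma cross_of_flat {L : List (ℕ × ℕ)}
    (h : (L.flatMap fun p => [p.1, p.2]).Pairwise (· > ·)) :
    L.Pairwise (fun p q => q.1 < p.2) := by
  induction L with
  | nil => simp
  | cons q t ih =>
    rw [List.flatMap_cons, List.pairwise_append] at h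
    refine List.Pairwise.cons ?_ (ih h.2.1)
    intro p hp
    exact h.2.2 q.2 (by simp) p.1 (mem_flat_of_mem hp).1

lemma fst_pairwise_of_flat {L : List (ℕ × ℕ)}
    (h : (L.flatMap fun p => [p.1, p.2]).Pairwise (· > ·)) :
    (L.map Prod.fst).Pairwise (· > ·) := h.sublist (sublist_fst L)

lemma snd_pairwise_of_flat {L : List (ℕ × ℕ)}
    (h : (L.flatMap fun p => [p.1, p.2]).Pairwise (· > ·)) :
    (L.map Prod.snd).Pairwise (· > ·) := h.sublist (sublist_snd L)

lemma nodup_of_pairwise_gt {l : List ℕ} (h : l.Pairwise (· > ·)) : l.Nodup :=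
  h.imp fun hab => Nat.ne_of_gt hab

/-! ### rimDown membership -/

lemma mem_sub_nodup {B F : Multiset ℕ} (h : F ≤ B) (hB : B.Nodup) {x : ℕ} :
    x ∈ B - F ↔ x ∈ B ∧ x ∉ F := by
  have hc1 : Multiset.count x F ≤ Multiset.count x B := Multiset.le_iff_count.mp h x
  have hc2 : Multiset.count x B ≤ 1 := Multiset.nodup_iff_count_le_one.mp hB x
  rw [← Multiset.count_pos, Multiset.count_sub, ← Multiset.count_pos, ← Multiset.count_pos]
  omega

lemma coe_fst_le {B : Multiset ℕ} {L : List (ℕ × ℕ)}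
    (hfn : (L.map Prod.fst).Nodup) (hfB : ∀ p ∈ L, p.1 ∈ B) :
    ↑(L.map Prod.fst) ≤ B := by
  rw [Multiset.le_iff_subset (Multiset.coe_nodup.mpr hfn)]
  intro x hx
  rw [Multiset.mem_coe, List.mem_map] at hx
  obtain ⟨p, hp, rfl⟩ := hx
  exact hfB p hp

lemma mem_rimDown {B : Multiset ℕ} {L : List (ℕ × ℕ)} (hB : B.Nodup)
    (hfn : (L.map Prod.fst).Nodup) (hfB : ∀ p ∈ L, p.1 ∈ B) {x : ℕ} :
    x ∈ rimDown B L ↔ (x ∈ B ∧ x ∉ L.map Prod.fst) ∨ x ∈ L.map Prod.snd := by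
  rw [rimDown, Multiset.mem_add, mem_sub_nodup (coe_fst_le hfn hfB) hB]
  simp only [Multiset.mem_coe]

lemma rimDown_nodup {B : Multiset ℕ} {L : List (ℕ × ℕ)} (hB : B.Nodup)
    (hfn : (L.map Prod.fst).Nodup) (hfB : ∀ p ∈ L, p.1 ∈ B)
    (hsn : (L.map Prod.snd).Nodup) (hsB : ∀ p ∈ L, p.2 ∉ B) :
    (rimDown B L).Nodup := by
  rw [rimDown, Multiset.nodup_add]
  refine ⟨Multiset.nodup_of_le (Multiset.sub_le_self _ _) hB, by
    rw [Multiset.coe_nodup]; exact hsn, Multiset.disjoint_left.mpr ?_⟩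
  intro x hx1 hx2
  have hxB : x ∈ B := (mem_sub_nodup (coe_fst_le hfn hfB) hB).mp hx1 |>.1
  rw [Multiset.mem_coe, List.mem_map] at hx2
  obtain ⟨p, hp, rfl⟩ := hx2
  exact hsB p hp hxB

lemma card_rimDown {B : Multiset ℕ} {L : List (ℕ × ℕ)}
    (hfn : (L.map Prod.fst).Nodup) (hfB : ∀ p ∈ L, p.1 ∈ B) :
    Multiset.card (rimDown B L) = Multiset.card B := by
  rw [rimDown, Multiset.card_add, Multiset.card_sub (coe_fst_le hfn hfB)]
  have h1 : Multiset.card (↑(L.map Prod.fst) : Multiset ℕ) ≤ Multiset.card B :=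
    Multiset.card_le_card (coe_fst_le hfn hfB)
  simp only [Multiset.coe_card, List.length_map] at h1 ⊢
  omega

lemma rimDown_le_bound {B : Multiset ℕ} {L : List (ℕ × ℕ)} {N : ℕ}
    (hB : B.Nodup) (hBle : ∀ x ∈ B, x ≤ N)
    (hfn : (L.map Prod.fst).Nodup) (hfB : ∀ p ∈ L, p.1 ∈ B)
    (hlt : ∀ p ∈ L, p.2 < p.1) :
    ∀ x ∈ rimDown B L, x ≤ N := by
  intro x hx
  rw [mem_rimDown hB hfn hfB] at hx
  rcases hx with ⟨hxB, -⟩ | hxS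
  · exact hBle x hxB
  · rw [List.mem_map] at hxS
    obtain ⟨p, hp, rfl⟩ := hxS
    have := hlt p hp
    have := hBle p.1 (hfB p hp)
    omega

/-- The rotated list. -/
def rotL (N : ℕ) (L : List (ℕ × ℕ)) : List (ℕ × ℕ) :=
  (L.map fun p => (N - p.2, N - p.1)).reverse

lemma rotL_fst_mem {N : ℕ} {L : List (ℕ × ℕ)} {x : ℕ} :
    x ∈ (rotL N L).map Prod.fst ↔ ∃ p ∈ L, N - p.2 = x := by
  simp [rotL]

lemma rotL_snd_mem {N : ℕ} {L : List (ℕ × ℕ)} {x : ℕ} :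
    x ∈ (rotL N L).map Prod.snd ↔ ∃ p ∈ L, N - p.1 = x := by
  simp [rotL]

lemma rotL_fst_nodup {N : ℕ} {L : List (ℕ × ℕ)}
    (hsn : (L.map Prod.snd).Pairwise (· > ·)) (hle : ∀ p ∈ L, p.2 ≤ N) :
    ((rotL N L).map Prod.fst).Nodup := by
  rw [rotL, List.map_reverse, List.nodup_reverse, List.map_map]
  have h0 : L.Pairwise (fun p q => q.2 < p.2) := List.pairwise_map.mp hsn
  have h1 : (L.map (Prod.fst ∘ fun p => (N - p.2, N - p.1))).Pairwise (· ≠ ·) := by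
    rw [List.pairwise_map]
    refine List.Pairwise.imp_of_mem ?_ h0
    intro a b ha hb hab
    have := hle a ha
    have := hle b hb
    simp only [Function.comp]
    omega
  exact h1

lemma rotL_snd_nodup {N : ℕ} {L : List (ℕ × ℕ)}
    (hfn : (L.map Prod.fst).Pairwise (· > ·)) (hle : ∀ p ∈ L, p.1 ≤ N) :
    ((rotL N L).map Prod.snd).Nodup := by
  rw [rotL, List.map_reverse, List.nodup_reverse, List.map_map]
  have h0 : L.Pairwise (fun p q => q.1 < p.1) := List.pairwise_map.mp hfn
  have h1 : (L.map (Prod.snd ∘ fun p => (N - p.2, N - p.1))).Pairwise (· ≠ ·) := by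
    rw [List.pairwise_map]
    refine List.Pairwise.imp_of_mem ?_ h0
    intro a b ha hb hab
    have := hle a ha
    have := hle b hb
    simp only [Function.comp]
    omega
  exact h1

/-- Step D: rotation-complement commutes with removing a rim. -/
lemma compRot_rimDown {B : Multiset ℕ} {L : List (ℕ × ℕ)} {N : ℕ}
    (hB : B.Nodup) (hBle : ∀ x ∈ B, x ≤ N)
    (hflat : (L.flatMap fun p => [p.1, p.2]).Pairwise (· > ·))
    (hpL : ∀ p ∈ L, p.1 ∈ B ∧ p.2 ∉ B) :
    rimDown (compRot N B) (rotL N L) = compRot N (rimDown B L) := by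
  have hfB : ∀ p ∈ L, p.1 ∈ B := fun p hp => (hpL p hp).1
  have hsB : ∀ p ∈ L, p.2 ∉ B := fun p hp => (hpL p hp).2
  have hlt : ∀ p ∈ L, p.2 < p.1 := snd_lt_fst_of_flat hflat
  have hfle : ∀ p ∈ L, p.1 ≤ N := fun p hp => hBle _ (hfB p hp)
  have hsle : ∀ p ∈ L, p.2 ≤ N := fun p hp => le_of_lt (lt_of_lt_of_le (hlt p hp) (hfle p hp))
  have hfpw := fst_pairwise_of_flat hflat
  have hspw := snd_pairwise_of_flat hflat
  have hfn : (L.map Prod.fst).Nodup := nodup_of_pairwise_gt hfpw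
  have hsn : (L.map Prod.snd).Nodup := nodup_of_pairwise_gt hspw
  have hBle' : B ≤ Multiset.range (N + 1) := le_range_of hB hBle
  have hB' : (compRot N B).Nodup := compRot_nodup N
  have hfn' : ((rotL N L).map Prod.fst).Nodup := rotL_fst_nodup hspw hsle
  have hsn' : ((rotL N L).map Prod.snd).Nodup := rotL_snd_nodup hfpw hfle
  have hfB' : ∀ q ∈ rotL N L, q.1 ∈ compRot N B := by
    intro q hq
    rw [rotL, List.mem_reverse, List.mem_map] at hq
    obtain ⟨p, hp, rfl⟩ := hq
    rw [mem_compRot hBle']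
    have h1 := hsle p hp
    exact ⟨by omega, by rw [Nat.sub_sub_self h1]; exact hsB p hp⟩
  have hsB' : ∀ q ∈ rotL N L, q.2 ∉ compRot N B := by
    intro q hq
    rw [rotL, List.mem_reverse, List.mem_map] at hq
    obtain ⟨p, hp, rfl⟩ := hq
    rw [mem_compRot hBle']
    rintro ⟨h1, h2⟩
    rw [Nat.sub_sub_self (hfle p hp)] at h2
    exact h2 (hfB p hp)
  have hDle : rimDown B L ≤ Multiset.range (N + 1) :=
    le_range_of (rimDown_nodup hB hfn hfB hsn hsB) (rimDown_le_bound hB hBle hfn hfB hlt)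
  refine (Multiset.Nodup.ext ?_ ?_).mpr ?_
  · exact rimDown_nodup hB' hfn' (fun q hq => (hfB' q hq)) hsn' hsB'
  · exact compRot_nodup N
  intro x
  rw [mem_rimDown hB' hfn' hfB', mem_compRot hDle, mem_rimDown hB hfn hfB, mem_compRot hBle']
  constructor
  · rintro (⟨⟨hxN, hNxB⟩, hxF'⟩ | hxS')
    · refine ⟨hxN, ?_⟩
      rintro (⟨hNxB', -⟩ | hNxS)
      · exact hNxB hNxB'
      · rw [List.mem_map] at hNxS
        obtain ⟨p, hp, hps⟩ := hNxS
        refine hxF' (rotL_fst_mem.mpr ⟨p, hp, ?_⟩)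
        have := hsle p hp
        omega
    · rw [rotL_snd_mem] at hxS'
      obtain ⟨p, hp, rfl⟩ := hxS'
      have h1 := hfle p hp
      refine ⟨by omega, ?_⟩
      rw [Nat.sub_sub_self h1]
      rintro (⟨-, hF⟩ | hS)
      · exact hF (List.mem_map.mpr ⟨p, hp, rfl⟩)
      · rw [List.mem_map] at hS
        obtain ⟨q, hq, hq2⟩ := hS
        exact hsB q hq (by rw [hq2]; exact hfB p hp)
  · rintro ⟨hxN, hcon⟩
    by_cases hF : N - x ∈ L.map Prod.fst
    · right
      rw [List.mem_map] at hF
      obtain ⟨p, hp, hp1⟩ := hF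
      rw [rotL_snd_mem]
      refine ⟨p, hp, ?_⟩
      have := hfle p hp
      omega
    · left
      have hNxB : N - x ∉ B := fun h => hcon (Or.inl ⟨h, hF⟩)
      have hNxS : N - x ∉ L.map Prod.snd := fun h => hcon (Or.inr h)
      refine ⟨⟨hxN, hNxB⟩, ?_⟩
      rw [rotL_fst_mem]
      rintro ⟨p, hp, hpx⟩
      have h2 := hsle p hp
      exact hNxS (List.mem_map.mpr ⟨p, hp, by omega⟩)



/-! ### index helpers -/

lemma get!_eq {l : List (ℕ × ℕ)} {i : ℕ} (h : i < l.length) : l[i]! = l[i]'h := by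
  rw [getElem!_pos l i h]

lemma headI_eq {l : List (ℕ × ℕ)} (h : l ≠ []) :
    l.headI = l[0]'(List.length_pos_iff.mpr h) := by
  cases l with
  | nil => exact absurd rfl h
  | cons a t => rfl

lemma getLast!_eq {l : List (ℕ × ℕ)} (h : l ≠ []) :
    l.getLast! = l[l.length - 1]'(by
      have := List.length_pos_iff.mpr h
      omega) := by
  rw [List.getLast!_eq_getElem!, getElem!_pos]

lemma rotL_length (N : ℕ) (L : List (ℕ × ℕ)) : (rotL N L).length = L.length := by
  simp [rotL]

lemma getElem_rotL {N : ℕ} {L : List (ℕ × ℕ)} {i : ℕ} (hi : i < L.length) :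
    (rotL N L)[i]'(by rw [rotL_length]; exact hi) =
      (N - (L[L.length - 1 - i]'(by omega)).2, N - (L[L.length - 1 - i]'(by omega)).1) := by
  simp [rotL, List.getElem_reverse, List.getElem_map]

lemma mod_eq_iff_dvd_sub {a b e : ℕ} (hle : b ≤ a) : a % e = b % e ↔ e ∣ (a - b) := by
  constructor
  · intro h
    exact Nat.dvd_of_mod_eq_zero (Nat.sub_mod_eq_zero_of_mod_eq h)
  · rintro ⟨k, hk⟩
    have h1 : a = b + e * k := by omega
    rw [h1, Nat.add_mul_mod_self_left]

lemma mod_sub_congr {N a b e : ℕ} (ha : a ≤ N) (hb : b ≤ N) (h : a % e = b % e) :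
    (N - a) % e = (N - b) % e := by
  rcases Nat.le_total a b with hab | hab
  · rw [mod_eq_iff_dvd_sub (by omega)]
    have h1 : e ∣ (b - a) := (mod_eq_iff_dvd_sub hab).mp h.symm
    have h2 : (N - a) - (N - b) = b - a := by omega
    rw [h2]
    exact h1
  · rw [eq_comm, mod_eq_iff_dvd_sub (by omega)]
    have h1 : e ∣ (a - b) := (mod_eq_iff_dvd_sub hab).mp h
    have h2 : (N - b) - (N - a) = a - b := by omega
    rw [h2]
    exact h1

/-- runner translation: if the runner of `(fk,gk)` is empty in `B` between
`gk` and `fk`, then the rotated runner is full in the complement. -/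
lemma runner_transport {e N fk gk : ℕ} {B : Multiset ℕ} (he : 1 ≤ e)
    (hBle : B ≤ Multiset.range (N + 1))
    (hfN : fk ≤ N) (hgf : gk < fk) (hmod : fk % e = gk % e)
    (hrun : ∀ j : ℕ, 1 ≤ j → gk + j * e < fk → gk + j * e ∉ B) :
    ∀ j : ℕ, 1 ≤ j → (N - fk) + j * e < N - gk → (N - fk) + j * e ∈ compRot N B := by
  intro j hj hlt
  obtain ⟨t, ht⟩ := (mod_eq_iff_dvd_sub hgf.le).mp hmod
  rw [Nat.mul_comm e t] at ht
  have hjt : j < t := by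
    by_contra hh
    push_neg at hh
    have := Nat.mul_le_mul_right e hh
    omega
  have hme : (t - j) * e = t * e - j * e := Nat.sub_mul t j e
  have h1 : 1 ≤ t - j := by omega
  have hcl : gk + (t - j) * e < fk := by
    have h2 : 1 * e ≤ j * e := Nat.mul_le_mul_right e hj
    omega
  have h3 := hrun (t - j) h1 hcl
  rw [mem_compRot hBle]
  constructor
  · omega
  · have h4 : N - ((N - fk) + j * e) = gk + (t - j) * e := by
      have h2 : 1 * e ≤ j * e := Nat.mul_le_mul_right e hj
      omega
    rw [h4]
    exact h3

/-! ### firstGap / lastBead facts -/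

lemma mem_of_lt_firstGap {B : Multiset ℕ} {p : ℕ} (h : p < firstGap B) : p ∈ B := by
  by_contra hc
  have h2 : firstGap B ≤ p := Nat.sInf_le (show p ∈ {q : ℕ | q ∉ B} from hc)
  omega

lemma exists_not_mem (B : Multiset ℕ) : {p : ℕ | p ∉ B}.Nonempty := by
  by_contra hc
  rw [Set.not_nonempty_iff_eq_empty] at hc
  have hall : ∀ p : ℕ, p ∈ B := by
    intro p
    by_contra hp
    have h2 : p ∈ {p : ℕ | p ∉ B} := hp
    simp [hc] at h2
  have hle : Multiset.range (Multiset.card B + 1) ≤ B := by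
    rw [Multiset.le_iff_subset (Multiset.nodup_range _)]
    exact fun x _ => hall x
  have h3 := Multiset.card_le_card hle
  simp at h3

lemma firstGap_not_mem (B : Multiset ℕ) : firstGap B ∉ B :=
  Nat.sInf_mem (exists_not_mem B)

lemma firstGap_le_of_card {B : Multiset ℕ} {N : ℕ} (hB : B.Nodup)
    (hcard : Multiset.card B < N + 1) : firstGap B ≤ N := by
  have hex : ∃ p, p ≤ N ∧ p ∉ B := by
    by_contra hc
    push_neg at hc
    have hle : Multiset.range (N + 1) ≤ B := by
      rw [Multiset.le_iff_subset (Multiset.nodup_range _)]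
      intro x hx
      exact hc x (by simpa using Nat.lt_succ_iff.mp (Multiset.mem_range.mp hx))
    have := Multiset.card_le_card hle
    simp at this
    omega
  obtain ⟨p, hpN, hpB⟩ := hex
  exact le_trans (Nat.sInf_le hpB) hpN

lemma lastBead_mem {B : Multiset ℕ} {N : ℕ} (hne : B ≠ 0) (hBle : ∀ x ∈ B, x ≤ N) :
    lastBead B ∈ B := by
  have h1 : {p : ℕ | p ∈ B}.Nonempty := by
    obtain ⟨x, hx⟩ := Multiset.exists_mem_of_ne_zero hne
    exact ⟨x, hx⟩
  exact Nat.sSup_mem h1 ⟨N, fun x hx => hBle x hx⟩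

lemma le_lastBead {B : Multiset ℕ} {N : ℕ} (hBle : ∀ x ∈ B, x ≤ N) {x : ℕ} (hx : x ∈ B) :
    x ≤ lastBead B := le_csSup ⟨N, fun y hy => hBle y hy⟩ hx

lemma firstGap_compRot {B : Multiset ℕ} {N : ℕ} (hne : B ≠ 0) (hB : B.Nodup)
    (hBle : ∀ x ∈ B, x ≤ N) : firstGap (compRot N B) = N - lastBead B := by
  have hle := le_range_of hB hBle
  have hlb : lastBead B ≤ N := hBle _ (lastBead_mem hne hBle)
  have h1 : N - lastBead B ∉ compRot N B := by
    rw [mem_compRot hle]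
    rintro ⟨-, h2⟩
    rw [Nat.sub_sub_self hlb] at h2
    exact h2 (lastBead_mem hne hBle)
  have h2 : ∀ q, q < N - lastBead B → q ∈ compRot N B := by
    intro q hq
    rw [mem_compRot hle]
    refine ⟨by omega, fun hc => ?_⟩
    have := le_lastBead hBle hc
    omega
  refine le_antisymm (Nat.sInf_le h1) ?_
  by_contra hc
  push_neg at hc
  have hmem : firstGap (compRot N B) ∈ {p : ℕ | p ∉ compRot N B} := Nat.sInf_mem ⟨_, h1⟩
  exact hmem (h2 _ hc)



lemma getElem_rotL' {N : ℕ} {L : List (ℕ × ℕ)} {i k : ℕ} (hi : i < L.length)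
    (hk : L.length - 1 - i = k) :
    (rotL N L)[i]'(by rw [rotL_length]; exact hi) =
      (N - (L[k]'(by omega)).2, N - (L[k]'(by omega)).1) := by
  subst hk
  exact getElem_rotL hi

lemma flat_rotL (N : ℕ) (L : List (ℕ × ℕ)) :
    ((rotL N L).flatMap fun q => [q.1, q.2]) =
      ((L.flatMap fun p => [p.1, p.2]).map (N - ·)).reverse := by
  induction L with
  | nil => simp [rotL]
  | cons p t ih =>
    have h1 : rotL N (p :: t) = rotL N t ++ [(N - p.2, N - p.1)] := by
      simp [rotL]
    rw [h1, List.flatMap_append, ih]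
    simp

/-- Transport: the conjugate rim sequence on `B` gives a rim sequence on the
rotated complement. -/
lemma transport {e : ℕ} {B : Multiset ℕ} {N : ℕ} {L : List (ℕ × ℕ)} (he : 1 ≤ e)
    (hB : B.Nodup) (hBle : ∀ x ∈ B, x ≤ N) (hBne : B ≠ 0)
    (hcard : Multiset.card B < N + 1)
    (hL : RimSeq' e B L) : RimSeq e (compRot N B) (rotL N L) := by
  obtain ⟨hL1, hL2, hL3, hL4, hL5, hL6⟩ := hL
  have hle := le_range_of hB hBle
  have hflat : (L.flatMap fun p => [p.1, p.2]).Pairwise (· > ·) :=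
    List.isChain_iff_pairwise.mp hL2
  have hlt : ∀ p ∈ L, p.2 < p.1 := snd_lt_fst_of_flat hflat
  have hfle : ∀ p ∈ L, p.1 ≤ N := fun p hp => hBle _ ((hL3 p hp).1)
  have hsle : ∀ p ∈ L, p.2 ≤ N := fun p hp => le_of_lt (lt_of_lt_of_le (hlt p hp) (hfle p hp))
  have hu : 0 < L.length := List.length_pos_iff.mpr hL1
  have hu1 : L.length - 1 < L.length := by omega
  have hflatle : ∀ x ∈ (L.flatMap fun p => [p.1, p.2]), x ≤ N := by
    intro x hx
    rw [List.mem_flatMap] at hx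
    obtain ⟨p, hp, hxp⟩ := hx
    simp only [List.mem_cons, List.not_mem_nil, or_false] at hxp
    rcases hxp with rfl | rfl
    · exact hfle p hp
    · exact hsle p hp
  have hrne : rotL N L ≠ [] := by
    simp only [rotL, ne_eq, List.reverse_eq_nil_iff, List.map_eq_nil_iff]
    exact hL1
  have hrlen : (rotL N L).length = L.length := rotL_length N L
  have hfg : firstGap B ≤ N := firstGap_le_of_card hB hcard
  have hLlast : L.getLast! = L[L.length - 1]'hu1 := getLast!_eq hL1
  have hLhead : L.headI = L[0]'hu := headI_eq hL1
  have hRhead : (rotL N L).headI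
      = (N - (L[L.length - 1]'hu1).2, N - (L[L.length - 1]'hu1).1) := by
    rw [headI_eq hrne]
    exact getElem_rotL' hu (by omega)
  have hRlast : (rotL N L).getLast!
      = (N - (L[0]'hu).2, N - (L[0]'hu).1) := by
    rw [getLast!_eq hrne]
    have h3 : (rotL N L).length - 1 < L.length := by omega
    have h4 := getElem_rotL' (N := N) (i := (rotL N L).length - 1) (k := 0) h3 (by omega)
    exact h4
  have hpairs : ∀ q ∈ rotL N L, q.1 ∈ compRot N B ∧ q.2 ∉ compRot N B := by
    intro q hq
    rw [rotL, List.mem_reverse, List.mem_map] at hq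
    obtain ⟨p, hp, rfl⟩ := hq
    constructor
    · rw [mem_compRot hle]
      exact ⟨by have := hsle p hp; omega,
        by rw [Nat.sub_sub_self (hsle p hp)]; exact (hL3 p hp).2⟩
    · rw [mem_compRot hle]
      rintro ⟨h1, h2⟩
      rw [Nat.sub_sub_self (hfle p hp)] at h2
      exact h2 (hL3 p hp).1
  have hchain : ((rotL N L).flatMap fun p => [p.1, p.2]).Chain' (· > ·) := by
    refine List.isChain_iff_pairwise.mpr ?_
    rw [flat_rotL, List.pairwise_reverse, List.pairwise_map]
    refine List.Pairwise.imp_of_mem ?_ hflat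
    intro a b ha hb hab
    have := hflatle a ha
    have := hflatle b hb
    simp only [gt_iff_lt]
    omega
  refine ⟨hrne, hchain, hpairs, ?_, ?_, ?_⟩
  · -- head maximality
    rw [hRhead]
    have hfg2 : (L[L.length - 1]'hu1).2 = firstGap B := by rw [← hLlast]; exact hL4
    constructor
    · rw [hfg2, mem_compRot hle]
      exact ⟨by omega, by rw [Nat.sub_sub_self hfg]; exact firstGap_not_mem B⟩
    · intro x hx
      rw [mem_compRot hle] at hx
      obtain ⟨hx1, hx2⟩ := hx
      have h3 : firstGap B ≤ N - x := Nat.sInf_le (show N - x ∈ {q : ℕ | q ∉ B} from hx2)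
      rw [hfg2]
      simp only
      omega
  · -- interior conditions
    intro i hi
    rw [hrlen] at hi
    have hkl : L.length - 1 - i < L.length := by omega
    have hkl' : L.length - 1 - i - 1 < L.length := by omega
    obtain ⟨hmod, hrun, hgap⟩ := hL5 (L.length - 1 - i) (by omega) (by omega)
    have e1 : L[L.length - 1 - i]! = L[L.length - 1 - i]'hkl := get!_eq hkl
    have e2 : L[L.length - 1 - i - 1]! = L[L.length - 1 - i - 1]'hkl' := get!_eq hkl'
    rw [e1] at hmod hrun hgap
    rw [e2] at hgap
    have hi' : i < (rotL N L).length := by omega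
    have hi'' : i + 1 < (rotL N L).length := by omega
    have e3 : (rotL N L)[i]!
        = (N - (L[L.length - 1 - i]'hkl).2, N - (L[L.length - 1 - i]'hkl).1) := by
      rw [get!_eq hi']
      exact getElem_rotL' (by omega) rfl
    have e4 : (rotL N L)[i + 1]!
        = (N - (L[L.length - 1 - i - 1]'hkl').2, N - (L[L.length - 1 - i - 1]'hkl').1) := by
      rw [get!_eq hi'']
      exact getElem_rotL' (by omega) (by omega)
    rw [e3, e4]
    have hmem : L[L.length - 1 - i]'hkl ∈ L := List.getElem_mem _
    have hmem' : L[L.length - 1 - i - 1]'hkl' ∈ L := List.getElem_mem _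
    refine ⟨?_, ?_, ?_⟩
    · exact mod_sub_congr (hsle _ hmem) (hfle _ hmem) hmod.symm
    · exact runner_transport he hle (hfle _ hmem) (hlt _ hmem) hmod hrun
    · intro p hp1 hp2
      simp only at hp1 hp2
      rw [mem_compRot hle]
      rintro ⟨hpN, hNp⟩
      refine hNp (hgap (N - p) ?_ ?_)
      · have := hfle _ hmem
        omega
      · have := hsle _ hmem'
        omega
  · -- terminal condition
    rw [hRlast]
    have hmem : L[0]'hu ∈ L := List.getElem_mem _
    rcases hL6 with ⟨hmod, hrun, hfill⟩ | ⟨hrun, hlast⟩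
    · left
      rw [hLhead] at hmod hrun hfill
      refine ⟨mod_sub_congr (hsle _ hmem) (hfle _ hmem) hmod.symm, ?_, ?_⟩
      · exact runner_transport he hle (hfle _ hmem) (hlt _ hmem) hmod hrun
      · intro p hp1 hp2
        simp only at hp1 hp2
        rw [firstGap_compRot hBne hB hBle] at hp1
        rw [mem_compRot hle]
        rintro ⟨hpN, hNp⟩
        refine hNp (hfill (N - p) ?_ ?_)
        · have := hfle _ hmem
          omega
        · have hlbN : lastBead B ≤ N := hBle _ (lastBead_mem hBne hBle)
          omega
    · right
      rw [hLhead] at hrun hlast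
      have hsk : (L[0]'hu).2 ≤ N := hsle _ hmem
      constructor
      · intro j hj hje
        simp only at hje ⊢
        rw [mem_compRot hle]
        have h2 := hrun j hj
        refine ⟨by omega, ?_⟩
        have h3 : N - ((N - (L[0]'hu).2) - j * e) = (L[0]'hu).2 + j * e := by
          omega
        rw [h3]
        exact h2
      · simp only
        rw [firstGap_compRot hBne hB hBle, hlast]


/-! ### structured rim sequences -/

inductive TSeq (e : ℕ) (B : Multiset ℕ) : ℕ → List (ℕ × ℕ) → Prop
  | last1 (b c : ℕ) : b ∈ B → c ∉ B → c < b → b % e = c % e →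
      (∀ j, 1 ≤ j → c + j * e < b → c + j * e ∈ B) →
      (∀ p, firstGap B ≤ p → p < c → p ∉ B) → TSeq e B b [(b, c)]
  | last2 (b c : ℕ) : b ∈ B → c ∉ B → c < b →
      (∀ j, 1 ≤ j → j * e ≤ b → b - j * e ∈ B) →
      c = firstGap B → TSeq e B b [(b, c)]
  | cons (b c b' : ℕ) (t : List (ℕ × ℕ)) : b ∈ B → c ∉ B → c < b → b' < c →
      b % e = c % e →
      (∀ j, 1 ≤ j → c + j * e < b → c + j * e ∈ B) →
      (∀ p, b' < p → p < c → p ∉ B) →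
      TSeq e B b' t → TSeq e B b ((b, c) :: t)

lemma TSeq_head_facts {e : ℕ} {B : Multiset ℕ} {b : ℕ} {L : List (ℕ × ℕ)}
    (h : TSeq e B b L) :
    L ≠ [] ∧ L.headI.1 = b ∧ L.headI.2 ∉ B ∧ L.headI.2 < b ∧ b ∈ B := by
  cases h with
  | last1 b c h1 h2 h3 h4 h5 h6 => exact ⟨by simp, rfl, h2, h3, h1⟩
  | last2 b c h1 h2 h3 h4 h5 => exact ⟨by simp, rfl, h2, h3, h1⟩
  | cons b c b' t h1 h2 h3 h4 h5 h6 h7 h8 => exact ⟨by simp, rfl, h2, h3, h1⟩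

lemma getLast!_cons' {a : ℕ × ℕ} {l : List (ℕ × ℕ)} (h : l ≠ []) :
    (a :: l).getLast! = l.getLast! := by
  cases l with
  | nil => exact absurd rfl h
  | cons b m => rw [List.getLast!_cons_eq_getLastD, List.getLast!_cons_eq_getLastD, List.getLastD_cons]

/-- conversion from an indexed RimSeq to the structured form. -/
lemma toTSeq {e : ℕ} {B : Multiset ℕ} :
    ∀ L : List (ℕ × ℕ), L ≠ [] →
      (L.flatMap fun p => [p.1, p.2]).Pairwise (· > ·) →
      (∀ p ∈ L, p.1 ∈ B ∧ p.2 ∉ B) →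
      (∀ i : ℕ, i + 1 < L.length →
        L[i]!.1 % e = L[i]!.2 % e ∧
        (∀ j : ℕ, 1 ≤ j → L[i]!.2 + j * e < L[i]!.1 → L[i]!.2 + j * e ∈ B) ∧
        (∀ p : ℕ, L[i + 1]!.1 < p → p < L[i]!.2 → p ∉ B)) →
      ((L.getLast!.1 % e = L.getLast!.2 % e ∧
          (∀ j : ℕ, 1 ≤ j → L.getLast!.2 + j * e < L.getLast!.1 → L.getLast!.2 + j * e ∈ B) ∧
          (∀ p : ℕ, firstGap B ≤ p → p < L.getLast!.2 → p ∉ B)) ∨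
        ((∀ j : ℕ, 1 ≤ j → j * e ≤ L.getLast!.1 → L.getLast!.1 - j * e ∈ B) ∧
          L.getLast!.2 = firstGap B)) →
      TSeq e B L.headI.1 L := by
  intro L
  induction L with
  | nil => intro h; exact absurd rfl h
  | cons p t ih =>
    intro _ hflat hpairs hint hlast
    have hp2 : p.2 < p.1 := snd_lt_fst_of_flat hflat p (by simp)
    have hpB := hpairs p (by simp)
    cases t with
    | nil =>
      have hgl : (p :: ([] : List (ℕ × ℕ))).getLast! = p := by simp [List.getLast!_cons_eq_getLastD]
      rw [hgl] at hlast
      rcases hlast with ⟨h1, h2, h3⟩ | ⟨h1, h2⟩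
      · exact TSeq.last1 p.1 p.2 hpB.1 hpB.2 hp2 h1 h2 h3
      · have := TSeq.last2 (e := e) p.1 p.2 hpB.1 hpB.2 hp2 h1 h2
        exact this
    | cons q t' =>
      have htne : (q :: t') ≠ [] := by simp
      -- tail hypotheses
      rw [List.flatMap_cons, List.pairwise_append] at hflat
      have hflat' := hflat.2.1
      have hpairs' : ∀ x ∈ q :: t', x.1 ∈ B ∧ x.2 ∉ B := fun x hx => hpairs x (by simp [hx])
      have hint' : ∀ i : ℕ, i + 1 < (q :: t').length →
          (q :: t')[i]!.1 % e = (q :: t')[i]!.2 % e ∧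
          (∀ j : ℕ, 1 ≤ j → (q :: t')[i]!.2 + j * e < (q :: t')[i]!.1 →
            (q :: t')[i]!.2 + j * e ∈ B) ∧
          (∀ x : ℕ, (q :: t')[i + 1]!.1 < x → x < (q :: t')[i]!.2 → x ∉ B) := by
        intro i hi
        have h0 := hint (i + 1) (by simpa using Nat.succ_lt_succ hi)
        rw [List.getElem!_cons_succ, List.getElem!_cons_succ] at h0
        exact h0
      have hlast' := hlast
      rw [getLast!_cons' htne] at hlast'
      have htail := ih htne hflat' hpairs' hint' hlast'
      -- head-pair conditions from interior at 0
      have h0 := hint 0 (by simp)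
      rw [List.getElem!_cons_zero, List.getElem!_cons_succ, List.getElem!_cons_zero] at h0
      obtain ⟨hmod, hrun, hgap⟩ := h0
      have hcross : q.1 < p.2 := by
        have hc := cross_of_flat (by rw [List.flatMap_cons, List.pairwise_append]; exact hflat)
        rw [List.pairwise_cons] at hc
        exact hc.1 q (by simp)
      exact TSeq.cons p.1 p.2 q.1 (q :: t') hpB.1 hpB.2 hp2 hcross hmod hrun hgap htail

/-! ### uniqueness helpers -/

lemma runner_full_excl {e : ℕ} {B : Multiset ℕ} {b c : ℕ}
    (hfull : ∀ j, 1 ≤ j → j * e ≤ b → b - j * e ∈ B)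
    (hmod : b % e = c % e) (hcB : c ∉ B) (hcb : c < b) : False := by
  obtain ⟨t, ht⟩ := (mod_eq_iff_dvd_sub hcb.le).mp hmod
  rw [Nat.mul_comm] at ht
  have ht1 : 1 ≤ t := by
    rcases Nat.eq_zero_or_pos t with rfl | h
    · simp at ht
      omega
    · exact h
  have h2 := hfull t ht1 (by omega)
  have h3 : b - t * e = c := by omega
  rw [h3] at h2
  exact hcB h2

lemma runner_gap_unique {e : ℕ} {B : Multiset ℕ} {b c₁ c₂ : ℕ}
    (hm₁ : b % e = c₁ % e) (hB₁ : c₁ ∉ B)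
    (hr₁ : ∀ j, 1 ≤ j → c₁ + j * e < b → c₁ + j * e ∈ B) (h₁ : c₁ < b)
    (hm₂ : b % e = c₂ % e) (hB₂ : c₂ ∉ B)
    (hr₂ : ∀ j, 1 ≤ j → c₂ + j * e < b → c₂ + j * e ∈ B) (h₂ : c₂ < b) : c₁ = c₂ := by
  have key : ∀ {d₁ d₂ : ℕ}, d₁ % e = d₂ % e → d₂ ∉ B →
      (∀ j, 1 ≤ j → d₁ + j * e < b → d₁ + j * e ∈ B) → d₂ < b → ¬ d₁ < d₂ := by
    intro d₁ d₂ hmod hB hr hlt hcon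
    obtain ⟨t, ht⟩ := (mod_eq_iff_dvd_sub hcon.le).mp hmod.symm
    rw [Nat.mul_comm] at ht
    have ht1 : 1 ≤ t := by
      rcases Nat.eq_zero_or_pos t with rfl | h
      · simp at ht
        omega
      · exact h
    have h3 := hr t ht1 (by omega)
    have h4 : d₁ + t * e = d₂ := by omega
    rw [h4] at h3
    exact hB h3
  have k1 := key (hm₁ ▸ hm₂ ▸ rfl : c₁ % e = c₂ % e) hB₂ hr₁ h₂
  have k2 := key (hm₂ ▸ hm₁ ▸ rfl : c₂ % e = c₁ % e) hB₁ hr₂ h₁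
  omega

lemma gapblock_excl {e : ℕ} {B : Multiset ℕ} {b'' c : ℕ} {t : List (ℕ × ℕ)}
    (hgap : ∀ p, firstGap B ≤ p → p < c → p ∉ B)
    (ht : TSeq e B b'' t) (hb : b'' < c) : False := by
  obtain ⟨-, -, hh2, hh3, hh4⟩ := TSeq_head_facts ht
  have h5 : b'' < firstGap B := by
    by_contra hcon
    exact hgap b'' (by omega) hb hh4
  exact hh2 (mem_of_lt_firstGap (by omega))

lemma TSeq_unique {e : ℕ} {B : Multiset ℕ} :
    ∀ {b : ℕ} {L₁ L₂ : List (ℕ × ℕ)}, TSeq e B b L₁ → TSeq e B b L₂ → L₁ = L₂ := by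
  intro b L₁ L₂ h₁ h₂
  induction h₁ generalizing L₂ with
  | last1 b c₁ hB₁ hc₁ hlt₁ hm₁ hr₁ hg₁ =>
    cases h₂ with
    | last1 b c₂ hB₂ hc₂ hlt₂ hm₂ hr₂ hg₂ =>
      rw [runner_gap_unique hm₁ hc₁ hr₁ hlt₁ hm₂ hc₂ hr₂ hlt₂]
    | last2 b c₂ hB₂ hc₂ hlt₂ hfull₂ hfg₂ =>
      exact absurd (runner_full_excl hfull₂ hm₁ hc₁ hlt₁) (by simp)
    | cons b c₂ b' t hB₂ hc₂ hlt₂ hb'₂ hm₂ hr₂ hg₂ ht₂ =>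
      have hcc : c₁ = c₂ := runner_gap_unique hm₁ hc₁ hr₁ hlt₁ hm₂ hc₂ hr₂ hlt₂
      subst hcc
      exact absurd (gapblock_excl hg₁ ht₂ hb'₂) (by simp)
  | last2 b c₁ hB₁ hc₁ hlt₁ hfull₁ hfg₁ =>
    cases h₂ with
    | last1 b c₂ hB₂ hc₂ hlt₂ hm₂ hr₂ hg₂ =>
      exact absurd (runner_full_excl hfull₁ hm₂ hc₂ hlt₂) (by simp)
    | last2 b c₂ hB₂ hc₂ hlt₂ hfull₂ hfg₂ =>
      rw [hfg₁, hfg₂]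
    | cons b c₂ b' t hB₂ hc₂ hlt₂ hb'₂ hm₂ hr₂ hg₂ ht₂ =>
      exact absurd (runner_full_excl hfull₁ hm₂ hc₂ hlt₂) (by simp)
  | cons b c₁ b₁' t₁ hB₁ hc₁ hlt₁ hb₁' hm₁ hr₁ hg₁ ht₁ ih =>
    cases h₂ with
    | last1 b c₂ hB₂ hc₂ hlt₂ hm₂ hr₂ hg₂ =>
      have hcc : c₁ = c₂ := runner_gap_unique hm₁ hc₁ hr₁ hlt₁ hm₂ hc₂ hr₂ hlt₂
      subst hcc
      exact absurd (gapblock_excl hg₂ ht₁ hb₁') (by simp)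
    | last2 b c₂ hB₂ hc₂ hlt₂ hfull₂ hfg₂ =>
      exact absurd (runner_full_excl hfull₂ hm₁ hc₁ hlt₁) (by simp)
    | cons b c₂ b₂' t₂ hB₂ hc₂ hlt₂ hb₂' hm₂ hr₂ hg₂ ht₂ =>
      have hcc : c₁ = c₂ := runner_gap_unique hm₁ hc₁ hr₁ hlt₁ hm₂ hc₂ hr₂ hlt₂
      subst hcc
      have hbb : b₁' = b₂' := by
        have hf₁ := TSeq_head_facts ht₁
        have hf₂ := TSeq_head_facts ht₂
        rcases Nat.lt_trichotomy b₁' b₂' with h | h | h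
        · exact absurd (hg₁ b₂' h hb₂') (by simp [hf₂.2.2.2.2])
        · exact h
        · exact absurd (hg₂ b₁' h hb₁') (by simp [hf₁.2.2.2.2])
      subst hbb
      rw [ih ht₂]



lemma rimLen_rotL {N : ℕ} {L : List (ℕ × ℕ)} (hle : ∀ p ∈ L, p.1 ≤ N) :
    rimLen (rotL N L) = rimLen L := by
  rw [rimLen, rimLen, rotL, List.map_reverse, List.sum_reverse, List.map_map]
  have h1 : L.map ((fun p : ℕ × ℕ => p.1 - p.2) ∘ fun p : ℕ × ℕ => (N - p.2, N - p.1))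
      = L.map fun p : ℕ × ℕ => p.1 - p.2 := by
    apply List.map_congr_left
    intro p hp
    simp only [Function.comp]
    have := hle p hp
    omega
  rw [h1]

end StmtAux

/-- for an e-restricted partition ν ≠ ∅, the conjugate rim construction
satisfies rim'(ν) = rim(ν') and ν^▽ = ((ν')^△)'.  Here L is the conjugate rim sequence
on the r-bead display of ν, and M the rim sequence on the s-bead display of ν'. -/
theorem stmt19 (e : ℕ) (he : 2 ≤ e) (f : ℕ → ℕ) (hf : IsPartition f)
    (hres : ERestricted e f) (hne : f 0 ≠ 0)
    (r s : ℕ) (hr : conj f 0 ≤ r) (hs : f 0 ≤ s)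
    (L M : List (ℕ × ℕ))
    (hL : RimSeq' e (betaSet f r) L) (hM : RimSeq e (betaSet (conj f) s) M) :
    rimLen L = rimLen M ∧
    partOfBeta (rimDown (betaSet f r) L)
      = conj (partOfBeta (rimDown (betaSet (conj f) s) M)) := by
  have he1 : 1 ≤ e := by omega
  set B := betaSet f r with hBdef
  set B' := betaSet (conj f) s with hB'def
  set N := r + s - 1 with hNdef
  have hr1 : 1 ≤ r := le_trans (conj_zero_pos hf hne) hr
  have hs1 : 1 ≤ s := le_trans (Nat.one_le_iff_ne_zero.mpr hne) hs
  have hBnd : B.Nodup := betaSet_nodup hf r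
  have hBle : ∀ x ∈ B, x ≤ N := fun x hx => by
    have := betaSet_le hf hx
    have := hf.1 (Nat.zero_le 0)
    omega
  have hcardB : Multiset.card B = r := card_betaSet f r
  have hcard : Multiset.card B < N + 1 := by omega
  have hBne : B ≠ 0 := by
    intro h
    rw [h] at hcardB
    simp at hcardB
    omega
  have hCORE : B' = compRot N B := betaSet_conj_eq hf hr hs hs1 hr1
  have htrans : RimSeq e (compRot N B) (rotL N L) := transport he1 hBnd hBle hBne hcard hL
  have hM' : RimSeq e (compRot N B) M := by rw [← hCORE]; exact hM
  have hMeq : M = rotL N L := by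
    obtain ⟨a1, a2, a3, a4, a5, a6⟩ := hM'
    obtain ⟨b1, b2, b3, b4, b5, b6⟩ := htrans
    have hT1 := toTSeq M a1 (List.isChain_iff_pairwise.mp a2) a3 a5 a6
    have hT2 := toTSeq (rotL N L) b1 (List.isChain_iff_pairwise.mp b2) b3 b5 b6
    have hhead : M.headI.1 = (rotL N L).headI.1 :=
      le_antisymm (b4.2 _ a4.1) (a4.2 _ b4.1)
    rw [hhead] at hT1
    exact TSeq_unique hT1 hT2
  have hflatL : (L.flatMap fun p => [p.1, p.2]).Pairwise (· > ·) :=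
    List.isChain_iff_pairwise.mp hL.2.1
  have hpairsL : ∀ p ∈ L, p.1 ∈ B ∧ p.2 ∉ B := hL.2.2.1
  have hfleL : ∀ p ∈ L, p.1 ≤ N := fun p hp => hBle _ ((hpairsL p hp).1)
  have hlen : rimLen L = rimLen M := by
    rw [hMeq]
    exact (rimLen_rotL hfleL).symm
  refine ⟨hlen, ?_⟩
  set D := rimDown B L with hDdef
  have hfpwL := fst_pairwise_of_flat hflatL
  have hspwL := snd_pairwise_of_flat hflatL
  have hfnL : (L.map Prod.fst).Nodup := nodup_of_pairwise_gt hfpwL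
  have hsnL : (L.map Prod.snd).Nodup := nodup_of_pairwise_gt hspwL
  have hfBL : ∀ p ∈ L, p.1 ∈ B := fun p hp => (hpairsL p hp).1
  have hsBL : ∀ p ∈ L, p.2 ∉ B := fun p hp => (hpairsL p hp).2
  have hltL : ∀ p ∈ L, p.2 < p.1 := snd_lt_fst_of_flat hflatL
  have hDnd : D.Nodup := rimDown_nodup hBnd hfnL hfBL hsnL hsBL
  have hDle : ∀ x ∈ D, x ≤ N := rimDown_le_bound hBnd hBle hfnL hfBL hltL
  have hDcard : Multiset.card D = r := by
    rw [hDdef, card_rimDown hfnL hfBL, hcardB]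
  set g := partOfBeta D with hgdef
  have hgP : IsPartition g := partOfBeta_isPartition hDnd
  have hbetag : betaSet g r = D := by
    rw [hgdef, ← hDcard]
    exact betaSet_partOfBeta hDnd
  have hg0 : g 0 ≤ s := by
    have h1 := partOfBeta_zero_le hDle
    rw [hDcard, ← hgdef] at h1
    omega
  have hconjg : conj g 0 ≤ r :=
    conj_zero_le_of_eq_zero hgP (partOfBeta_eq_zero (by omega))
  have hCOREg : betaSet (conj g) s = compRot N (betaSet g r) :=
    betaSet_conj_eq hgP hconjg hg0 hs1 hr1
  have hstepD : rimDown (compRot N B) (rotL N L) = compRot N D :=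
    compRot_rimDown hBnd hBle hflatL hpairsL
  have hfinal : rimDown B' M = betaSet (conj g) s := by
    rw [hMeq, hCORE, hstepD, hCOREg, hbetag]
  rw [hfinal]
  have hcgP : IsPartition (conj g) := conj_isPartition hgP
  have hcg0 : conj (conj g) 0 ≤ s := by
    rw [conj_conj_apply hgP]
    exact hg0
  rw [partOfBeta_betaSet hcgP hcg0]
  funext j
  rw [conj_conj_apply hgP j]
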